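/- For a simple directed cycle on n states A_1 → A_2 → ⋯ → A_n → A_1 with rates q_{i+1,i} = 1/p*_i, the velocity at a distribution P has coordinates (𝐯_n)_j = p_{j-1}/p*_{j-1} − p_j/p*_j (indices mod n). If p_1/p*_1 = min_j p_j/p*_j and p_1/p*_1 ≠ p_2/p*_2, then 𝐯_n = 𝐯_{n-1} + κ 𝐯_2, where 𝐯_{n-1} is the velocity of the cycle A_2 → ⋯ → A_n → A_2 with rates 1/p*_i, 𝐯_2 is the velocity of A_1 ⇌ A_2 with rates 1/p*_1, 1/p*_2, and κ = (p_n/p*_n − p_1/p*_1)/(p_2/p*_2 − p_1/p*_1) ≥ 0. -/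
import Mathlib


/-- For the simple cycle `A_1 → A_2 → ⋯ → A_n → A_1`
(on `n + 3 ≥ 3` states, state `A_1` is index `0`) with rates `1/p*_i`, the
velocity at `P` has coordinates `(𝐯_n)_j = p_{j−1}/p*_{j−1} − p_j/p*_j`
(indices mod `n`). If `p_1/p*_1` is minimal among the `p_j/p*_j` and
`p_1/p*_1 ≠ p_2/p*_2`, then `𝐯_n = 𝐯_{n−1} + κ 𝐯_2` where `𝐯_{n−1}` is the
velocity of the shorter cycle `A_2 → ⋯ → A_n → A_2`, `𝐯_2` that of
`A_1 ⇌ A_2`, and `κ = (p_n/p*_n − p_1/p*_1)/(p_2/p*_2 − p_1/p*_1) ≥ 0`. -/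
theorem cycle_velocity_decomposition_step
    (n : ℕ) (ps P : Fin (n + 3) → ℝ)
    (hps : ∀ i, 0 < ps i)
    (hmin : ∀ j, P 0 / ps 0 ≤ P j / ps j)
    (hne : P 0 / ps 0 ≠ P 1 / ps 1) :
    let last : Fin (n + 3) := Fin.last (n + 2)
    let vn : Fin (n + 3) → ℝ := fun j => P (j - 1) / ps (j - 1) - P j / ps j
    let vprev : Fin (n + 3) → ℝ := fun j =>
      if j = 0 then 0
      else if j = 1 then P last / ps last - P 1 / ps 1
      else P (j - 1) / ps (j - 1) - P j / ps j
    let v2 : Fin (n + 3) → ℝ := fun j =>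
      if j = 0 then P 1 / ps 1 - P 0 / ps 0
      else if j = 1 then -(P 1 / ps 1 - P 0 / ps 0)
      else 0
    let κ : ℝ := (P last / ps last - P 0 / ps 0) / (P 1 / ps 1 - P 0 / ps 0)
    (∀ j, vn j = vprev j + κ * v2 j) ∧ 0 ≤ κ := by
  intro last vn vprev v2 κ
  have hd : 0 < P 1 / ps 1 - P 0 / ps 0 := sub_pos.mpr (lt_of_le_of_ne (hmin 1) hne)
  have hzl : (0 : Fin (n + 3)) - 1 = last := by
    simp [last, Fin.ext_iff, Fin.sub_def, Fin.last]
  have honel : (1 : Fin (n + 3)) - 1 = 0 := by simp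
  have hκ : 0 ≤ κ := div_nonneg (sub_nonneg.mpr (hmin last)) hd.le
  refine ⟨fun j => ?_, hκ⟩
  by_cases h0 : j = 0
  · subst h0
    simp only [vn, vprev, v2, κ, hzl, if_pos rfl]
    rw [div_mul_cancel₀ _ hd.ne']
    ring
  by_cases h1 : j = 1
  · subst h1
    have h10 : (1 : Fin (n + 3)) ≠ 0 := h0
    simp only [vn, vprev, v2, κ, honel, if_neg h10, if_true]
    rw [mul_neg, div_mul_cancel₀ _ hd.ne']
    ring
  · simp only [vn, vprev, v2, if_neg h0, if_neg h1, mul_zero, add_zero]
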